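/- Let $(x_n)$ be a weakly null sequence of nonzero indicator functions of clopen sets on a compact metric space $K$. Then $(x_n)$ is a 1-suppression unconditional basic sequence if and only if the associated tree $\mathcal{T} = \bigcup_n \{(\epsilon_1,\ldots,\epsilon_n) \in \{-1,1\}^n : \bigcap_{i=1}^n (\mathrm{supp}\, x_i)^{\epsilon_i} \ne \emptyset\}$ is weakly independent, i.e., whenever $(\epsilon_1,\ldots,\epsilon_j) \in \mathcal{T}$ and $(\epsilon'_1,\ldots,\epsilon'_j)$ satisfies $\epsilon'_i = -1$ whenever $\epsilon_i = -1$ (and $\epsilon'_i \in \{-1,1\}$ otherwise), then $(\epsilon'_1,\ldots,\epsilon'_j) \in \mathcal{T}$. -/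

import Mathlib

open Filter Topology Classical

/-- Rosenthal: a weakly null sequence of nonzero indicator
functions of clopen sets on a compact metric space is a 1-suppression
unconditional basic sequence iff the associated tree of sign patterns is
weakly independent.  A pattern `ε : Fin n → Bool` is in the tree iff some
point of `K` realizes it (`true` = in the support, `false` = in the
complement). -/
theorem stmt_8 {K : Type*} [MetricSpace K] [CompactSpace K]
    (x : ℕ → C(K, ℝ))
    (hind : ∀ n, ∃ U : Set K, IsClopen U ∧ U.Nonempty ∧
      ∀ k, x n k = if k ∈ U then 1 else 0)
    (hweak : ∀ φ : StrongDual ℝ C(K, ℝ),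
      Tendsto (fun n => φ (x n)) atTop (𝓝 0)) :
    (∀ (a : ℕ → ℝ) (s G : Finset ℕ), G ⊆ s →
        ‖∑ n ∈ G, a n • x n‖ ≤ ‖∑ n ∈ s, a n • x n‖) ↔
    (∀ (n : ℕ) (ε ε' : Fin n → Bool),
        (∃ k : K, ∀ i : Fin n, (x i k = 1 ↔ ε i = true)) →
        (∀ i, ε' i = true → ε i = true) →
        (∃ k : K, ∀ i : Fin n, (x i k = 1 ↔ ε' i = true))) := by
  classical
  have h01 : ∀ (i : ℕ) (k : K), x i k = 0 ∨ x i k = 1 := by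
    intro i k
    obtain ⟨U, -, -, hval⟩ := hind i
    rw [hval]
    by_cases h : k ∈ U <;> simp [h]
  have hone : ∀ i : ℕ, ∃ k : K, x i k = 1 := by
    intro i
    obtain ⟨U, -, ⟨k, hk⟩, hval⟩ := hind i
    exact ⟨k, by simp [hval, hk]⟩
  have hx0 : ∀ (i : ℕ) (k : K), 0 ≤ x i k := by
    intro i k; rcases h01 i k with h | h <;> rw [h] <;> norm_num
  have hx1 : ∀ (i : ℕ) (k : K), x i k ≤ 1 := by
    intro i k; rcases h01 i k with h | h <;> rw [h] <;> norm_num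
  have evalSum : ∀ (a : ℕ → ℝ) (s : Finset ℕ) (p : K),
      (∑ i ∈ s, a i • x i) p = ∑ i ∈ s, a i * x i p := by
    intro a s p; simp
  constructor
  · -- suppression unconditionality → weak independence of the tree
    rintro h n ε ε' ⟨k₀, hk₀⟩ hle
    by_contra hno
    push_neg at hno
    set c : ℝ := 1 / ((n : ℝ) + 1) with hc_def
    have hn1 : (0:ℝ) < (n:ℝ) + 1 := by positivity
    have hc_pos : 0 < c := by positivity
    have hc1 : c ≤ 1 := by
      rw [hc_def, div_le_one hn1]; linarith [Nat.cast_nonneg (α := ℝ) n]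
    have hcn : c * ((n:ℝ) + 1) = 1 := by
      rw [hc_def]; field_simp
    set G : Finset ℕ :=
      (Finset.univ.filter fun i : Fin n => ε' i = true).image Fin.val with hG_def
    have hGmem : ∀ j : ℕ, j ∈ G ↔ ∃ h : j < n, ε' ⟨j, h⟩ = true := by
      intro j
      constructor
      · intro hj
        rw [hG_def] at hj
        obtain ⟨i, hi, rfl⟩ := Finset.mem_image.mp hj
        exact ⟨i.isLt, by simpa using Finset.mem_filter.mp hi |>.2⟩
      · rintro ⟨hj, hj'⟩
        rw [hG_def]
        exact Finset.mem_image.mpr ⟨⟨j, hj⟩, Finset.mem_filter.mpr ⟨Finset.mem_univ _, hj'⟩, rfl⟩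
    have hGsub : G ⊆ Finset.range n := by
      intro j hj
      obtain ⟨hj', -⟩ := (hGmem j).mp hj
      exact Finset.mem_range.mpr hj'
    rcases G.eq_empty_or_nonempty with hGe | hGne
    · -- the pattern ε' is identically false
      have hε' : ∀ i : Fin n, ε' i = false := by
        intro i
        by_contra hi
        have : (i : ℕ) ∈ G := (hGmem i).mpr ⟨i.isLt, by simpa using hi⟩
        simp [hGe] at this
      have hB1 : ∀ p : K, ∃ i : Fin n, x i p = 1 := by
        intro p
        obtain ⟨i, hi⟩ := hno p
        rcases hi with ⟨h1, -⟩ | ⟨-, h2⟩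
        · exact ⟨i, h1⟩
        · exact absurd h2 (by simp [hε' i])
      set a : ℕ → ℝ := fun i => if i = n then 1 else -c with ha_def
      have hkey := h a (Finset.range (n+1)) {n}
        (Finset.singleton_subset_iff.mpr (Finset.self_mem_range_succ n))
      have hg : ∑ i ∈ ({n} : Finset ℕ), a i • x i = x n := by
        simp [ha_def]
      rw [hg] at hkey
      obtain ⟨k₁, hk₁⟩ := hone n
      have hxn_norm : (1:ℝ) ≤ ‖x n‖ := by
        calc (1:ℝ) = ‖x n k₁‖ := by rw [hk₁]; simp
        _ ≤ ‖x n‖ := (x n).norm_coe_le_norm k₁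
      have hf_bound : ∀ p : K, ‖(∑ i ∈ Finset.range (n+1), a i • x i) p‖ ≤ 1 - c := by
        intro p
        rw [evalSum, Finset.sum_range_succ]
        have hA : ∀ i ∈ Finset.range n, a i * x i p = -c * x i p := by
          intro i hi
          have : i ≠ n := Nat.ne_of_lt (Finset.mem_range.mp hi)
          simp [ha_def, this]
        rw [Finset.sum_congr rfl hA]
        have han : a n = 1 := by simp [ha_def]
        rw [han, one_mul]
        set B : ℝ := ∑ i ∈ Finset.range n, x i p with hB_def
        have hsum : ∑ i ∈ Finset.range n, -c * x i p = -c * B := by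
          rw [hB_def, Finset.mul_sum]
        rw [hsum]
        obtain ⟨i₀, hi₀⟩ := hB1 p
        have hBge : (1:ℝ) ≤ B := by
          rw [hB_def]
          calc (1:ℝ) = x i₀ p := hi₀.symm
          _ ≤ ∑ i ∈ Finset.range n, x i p := by
              exact Finset.single_le_sum (fun i _ => hx0 i p)
                (Finset.mem_range.mpr i₀.isLt)
        have hBle : B ≤ (n:ℝ) := by
          rw [hB_def]
          calc ∑ i ∈ Finset.range n, x i p ≤ ∑ i ∈ Finset.range n, (1:ℝ) :=
              Finset.sum_le_sum fun i _ => hx1 i p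
          _ = (n:ℝ) := by simp
        have h1 : x n p ≤ 1 := hx1 n p
        have h2 : 0 ≤ x n p := hx0 n p
        rw [Real.norm_eq_abs, abs_le]
        constructor
        · nlinarith
        · nlinarith
      have hf_norm : ‖∑ i ∈ Finset.range (n+1), a i • x i‖ ≤ 1 - c :=
        (ContinuousMap.norm_le _ (by linarith)).mpr hf_bound
      linarith
    · -- G nonempty
      set m : ℝ := (G.card : ℝ) with hm_def
      have hm1 : (1:ℝ) ≤ m := by
        rw [hm_def]
        exact_mod_cast Finset.card_pos.mpr hGne
      set a : ℕ → ℝ := fun i => if i ∈ G then 1 else -c with ha_def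
      have hkey := h a (Finset.range n) G hGsub
      -- the G-sum has norm at least m
      have hxG : ∀ j ∈ G, x j k₀ = 1 := by
        intro j hj
        obtain ⟨hjn, hj'⟩ := (hGmem j).mp hj
        exact (hk₀ ⟨j, hjn⟩).mpr (hle _ hj')
      have hg_val : (∑ i ∈ G, a i • x i) k₀ = m := by
        rw [evalSum]
        rw [hm_def]
        rw [Finset.card_eq_sum_ones, Nat.cast_sum]
        refine Finset.sum_congr rfl fun j hj => ?_
        rw [hxG j hj]
        simp [ha_def, hj]
      have hg_norm : m ≤ ‖∑ i ∈ G, a i • x i‖ := by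
        calc m = (∑ i ∈ G, a i • x i) k₀ := hg_val.symm
        _ ≤ ‖(∑ i ∈ G, a i • x i) k₀‖ := le_abs_self _
        _ ≤ ‖∑ i ∈ G, a i • x i‖ := (∑ i ∈ G, a i • x i).norm_coe_le_norm k₀
      have hf_bound : ∀ p : K, ‖(∑ i ∈ Finset.range n, a i • x i) p‖ ≤ m - c := by
        intro p
        rw [evalSum]
        have hsplit : ∑ i ∈ Finset.range n, a i * x i p =
            (∑ i ∈ Finset.range n \ G, a i * x i p) + ∑ i ∈ G, a i * x i p :=
          (Finset.sum_sdiff hGsub).symm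
        set A : ℝ := ∑ i ∈ G, x i p with hA_def
        set B : ℝ := ∑ i ∈ Finset.range n \ G, x i p with hB_def
        have hAeq : ∑ i ∈ G, a i * x i p = A := by
          rw [hA_def]
          refine Finset.sum_congr rfl fun j hj => ?_
          simp [ha_def, hj]
        have hBeq : ∑ i ∈ Finset.range n \ G, a i * x i p = -c * B := by
          rw [hB_def, Finset.mul_sum]
          refine Finset.sum_congr rfl fun j hj => ?_
          have : j ∉ G := (Finset.mem_sdiff.mp hj).2
          simp [ha_def, this]
        rw [hsplit, hAeq, hBeq]
        have hA0 : 0 ≤ A := Finset.sum_nonneg fun i _ => hx0 i p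
        have hAm : A ≤ m := by
          rw [hA_def, hm_def]
          calc ∑ i ∈ G, x i p ≤ ∑ i ∈ G, (1:ℝ) := Finset.sum_le_sum fun i _ => hx1 i p
          _ = (G.card : ℝ) := by simp
        have hB0 : 0 ≤ B := Finset.sum_nonneg fun i _ => hx0 i p
        have hBn : B ≤ (n:ℝ) := by
          rw [hB_def]
          calc ∑ i ∈ Finset.range n \ G, x i p ≤ ∑ i ∈ Finset.range n \ G, (1:ℝ) :=
              Finset.sum_le_sum fun i _ => hx1 i p
          _ = ((Finset.range n \ G).card : ℝ) := by simp
          _ ≤ ((Finset.range n).card : ℝ) := by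
              exact_mod_cast Finset.card_le_card (Finset.sdiff_subset)
          _ = (n:ℝ) := by simp
        -- dichotomy from non-realizability at p
        obtain ⟨i₀, hi₀⟩ := hno p
        have hdich : A ≤ m - 1 ∨ 1 ≤ B := by
          rcases hi₀ with ⟨h1, hbf⟩ | ⟨hne1, hε'i⟩
          · -- x i₀ p = 1 and ε' i₀ ≠ true, so i₀ ∉ G and B ≥ 1
            have hiG : (i₀ : ℕ) ∉ G := by
              intro hcon
              obtain ⟨hlt, he⟩ := (hGmem i₀).mp hcon
              rw [show (⟨(i₀ : ℕ), hlt⟩ : Fin n) = i₀ from Fin.ext rfl] at he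
              exact hbf he
            right
            rw [hB_def]
            calc (1:ℝ) = x i₀ p := h1.symm
            _ ≤ ∑ i ∈ Finset.range n \ G, x i p :=
                Finset.single_le_sum (fun i _ => hx0 i p)
                  (Finset.mem_sdiff.mpr ⟨Finset.mem_range.mpr i₀.isLt, hiG⟩)
          · -- x i₀ p ≠ 1 (hence = 0) and ε' i₀ = true, so i₀ ∈ G and A ≤ m - 1
            have h0 : x i₀ p = 0 := (h01 i₀ p).resolve_right hne1
            have hiG : (i₀ : ℕ) ∈ G := (hGmem i₀).mpr ⟨i₀.isLt, by simpa using hε'i⟩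
            left
            have herase : A = (∑ i ∈ G.erase i₀, x i p) + x i₀ p := by
              rw [hA_def, Finset.sum_erase_add G _ hiG]
            have hrest : ∑ i ∈ G.erase i₀, x i p ≤ m - 1 := by
              calc ∑ i ∈ G.erase i₀, x i p ≤ ∑ i ∈ G.erase i₀, (1:ℝ) :=
                  Finset.sum_le_sum fun i _ => hx1 i p
              _ = ((G.erase i₀).card : ℝ) := by simp
              _ = m - 1 := by
                  rw [Finset.card_erase_of_mem hiG, hm_def]
                  have : 1 ≤ G.card := Finset.card_pos.mpr hGne
                  push_cast [Nat.cast_sub this]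
                  ring
            rw [herase, h0]
            linarith
        rw [Real.norm_eq_abs, abs_le]
        rcases hdich with hd | hd
        · constructor <;> nlinarith
        · constructor <;> nlinarith
      have hf_norm : ‖∑ i ∈ Finset.range n, a i • x i‖ ≤ m - c :=
        (ContinuousMap.norm_le _ (by linarith)).mpr hf_bound
      linarith
  · -- weak independence of the tree → suppression unconditionality
    intro h a s G hGs
    have hK : Nonempty K := ⟨(hone 0).choose⟩
    set n : ℕ := s.sup id + 1 with hn_def
    have hns : ∀ i ∈ s, i < n := fun i hi =>
      Nat.lt_succ_of_le (Finset.le_sup (f := id) hi)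
    set g : C(K, ℝ) := ∑ i ∈ G, a i • x i with hg_def
    obtain ⟨p, -, hp⟩ := IsCompact.exists_isMaxOn isCompact_univ Set.univ_nonempty
      (Continuous.continuousOn (g.continuous.abs))
    set v : ℝ := g p with hv_def
    have hMv : ‖g‖ ≤ |v| :=
      (ContinuousMap.norm_le _ (abs_nonneg v)).mpr fun q => by
        rw [Real.norm_eq_abs]; exact hp (Set.mem_univ q)
    rcases eq_or_ne v 0 with hv0 | hv0
    · calc ‖g‖ ≤ |v| := hMv
      _ = 0 := by rw [hv0, abs_zero]
      _ ≤ ‖∑ i ∈ s, a i • x i‖ := norm_nonneg _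
    · set ε : Fin n → Bool := fun i => decide (x i p = 1) with hε_def
      set ε' : Fin n → Bool :=
        fun i => ε i && decide ((i : ℕ) ∈ G ∨ 0 ≤ a i * v) with hε'_def
      obtain ⟨q, hq⟩ := h n ε ε'
        ⟨p, fun i => by simp [hε_def]⟩
        (fun i hi => by
          rw [hε'_def] at hi
          exact (Bool.and_eq_true _ _ |>.mp hi).1)
      -- on G, x i q = x i p
      have hGq : ∀ j ∈ G, x j q = x j p := by
        intro j hj
        have hjn : j < n := hns j (hGs hj)
        have he' : ε' ⟨j, hjn⟩ = ε ⟨j, hjn⟩ := by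
          rw [hε'_def]
          simp [hj]
        have h1 : x j q = 1 ↔ x j p = 1 := by
          rw [hq ⟨j, hjn⟩, he', hε_def]
          simp
        rcases h01 j q with h0q | h1q <;> rcases h01 j p with h0p | h1p
        · rw [h0q, h0p]
        · exfalso; rw [h0q] at h1; have := h1.mpr h1p; norm_num at this
        · exfalso; rw [h0p] at h1; have := h1.mp h1q; norm_num at this
        · rw [h1q, h1p]
      have hGsum : ∑ i ∈ G, a i * x i q = v := by
        rw [hv_def, hg_def, evalSum]
        exact Finset.sum_congr rfl fun j hj => by rw [hGq j hj]
      -- terms outside G have the same sign as v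
      have hsign : ∀ j ∈ s \ G, 0 ≤ (a j * x j q) * v := by
        intro j hj
        obtain ⟨hjs, hjG⟩ := Finset.mem_sdiff.mp hj
        have hjn : j < n := hns j hjs
        rcases h01 j q with h0 | h1
        · rw [h0]; ring_nf; simp
        · have he' : ε' ⟨j, hjn⟩ = true := (hq ⟨j, hjn⟩).mp h1
          rw [hε'_def] at he'
          have := (Bool.and_eq_true _ _ |>.mp he').2
          have hor : (j : ℕ) ∈ G ∨ 0 ≤ a j * v := by
            simpa using this
          rcases hor with hc | hc
          · exact absurd hc hjG
          · rw [h1, mul_one]; exact hc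
      have hsplit : (∑ i ∈ s, a i • x i) q =
          (∑ i ∈ s \ G, a i * x i q) + v := by
        rw [evalSum, ← hGsum]
        exact (Finset.sum_sdiff hGs).symm
      set T : ℝ := ∑ i ∈ s \ G, a i * x i q with hT_def
      have hTv : 0 ≤ T * v := by
        rw [hT_def, Finset.sum_mul]
        exact Finset.sum_nonneg fun j hj => hsign j hj
      have hfinal : |v| ≤ |(∑ i ∈ s, a i • x i) q| := by
        rw [hsplit]
        rcases lt_or_gt_of_ne hv0 with hv | hv
        · have hT : T ≤ 0 := by nlinarith
          rw [abs_of_neg hv, abs_of_neg (by linarith : T + v < 0)]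
          linarith
        · have hT : 0 ≤ T := by nlinarith
          rw [abs_of_pos hv, abs_of_pos (by linarith : 0 < T + v)]
          linarith
      calc ‖g‖ ≤ |v| := hMv
      _ ≤ |(∑ i ∈ s, a i • x i) q| := hfinal
      _ ≤ ‖∑ i ∈ s, a i • x i‖ := by
          rw [← Real.norm_eq_abs]
          exact ContinuousMap.norm_coe_le_norm _ q
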